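/- Let H and H' be discretely valued hyperfields whose absolute values take some value other than 0 and 1 and whose norms are positive (equivalently, neither is a field), and let f : H → H' be an isomorphism of hyperfields. Then |f(x)| = |x|^{(log θ_{H'})/(log θ_H)} for all x ∈ H; in particular, if π ∈ H has |π| = θ_H then |f(π)| = θ_{H'}. -/

import Mathlib

/-- A (Krasner) valued hyperfield: a hyperfield with a multivalued addition,
single-valued multiplication, an absolute value, the induced distance `dist`,
and the norm `rho`. -/
structure ValuedHyperfield where
  carrier : Type
  add : carrier → carrier → Set carrier
  mul : carrier → carrier → carrier
  zero : carrier
  one : carrier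
  neg : carrier → carrier
  abs : carrier → ℝ
  dist : carrier → carrier → ℝ
  rho : ℝ
  add_comm : ∀ x y, add x y = add y x
  add_assoc : ∀ x y z, (⋃ t ∈ add x y, add t z) = ⋃ t ∈ add y z, add x t
  add_zero : ∀ x, add x zero = {x}
  neg_mem : ∀ x, zero ∈ add x (neg x)
  neg_unique : ∀ x y, zero ∈ add x y → y = neg x
  reverse : ∀ x y z, x ∈ add y (neg z) ↔ y ∈ add x z
  mul_comm : ∀ x y, mul x y = mul y x
  mul_assoc : ∀ x y z, mul (mul x y) z = mul x (mul y z)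
  mul_one : ∀ x, mul x one = x
  one_ne_zero : one ≠ zero
  mul_inv : ∀ x, x ≠ zero → ∃ y, mul x y = one
  distrib : ∀ x y z, (fun t => mul t z) '' add x y ⊆ add (mul x z) (mul y z)
  abs_nonneg : ∀ x, 0 ≤ abs x
  abs_eq_zero_iff : ∀ x, abs x = 0 ↔ x = zero
  abs_mul : ∀ x y, abs (mul x y) = abs x * abs y
  abs_add_le : ∀ x y z, z ∈ add x y → abs z ≤ max (abs x) (abs y)
  abs_add_unique : ∀ x y, zero ∉ add x y →
    ∀ z w, z ∈ add x y → w ∈ add x y → abs z = abs w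
  dist_self : ∀ x, dist x x = 0
  dist_eq : ∀ x y z, x ≠ y → z ∈ add x (neg y) → dist x y = abs z
  rho_nonneg : 0 ≤ rho
  rho_ball : ∀ x y, (∃ w, add x y = {z | dist z w ≤ rho * max (abs x) (abs y)}) ∨
      (∃ w, add x y = {z | dist z w < rho * max (abs x) (abs y)})
  rho_min : ∀ r : ℝ, 0 ≤ r →
      (∀ x y, (∃ w, add x y = {z | dist z w ≤ r * max (abs x) (abs y)}) ∨
        (∃ w, add x y = {z | dist z w < r * max (abs x) (abs y)})) → rho ≤ r

/-- The valuation is discrete: every nonzero value of the absolute value is an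
isolated point of the image of the absolute value. -/
def ValuedHyperfield.Discrete (V : ValuedHyperfield) : Prop :=
  ∀ r ∈ Set.range V.abs, r ≠ 0 →
    ∃ ε > (0 : ℝ), ∀ s ∈ Set.range V.abs, |s - r| < ε → s = r

/-- `θ` is the largest absolute value which is strictly less than 1, attained
at some nonzero element. -/
def ValuedHyperfield.IsTheta (V : ValuedHyperfield) (θ : ℝ) : Prop :=
  (∃ x, x ≠ V.zero ∧ V.abs x = θ) ∧ θ < 1 ∧
    ∀ x, x ≠ V.zero → V.abs x < 1 → V.abs x ≤ θ

/-- An isomorphism of the underlying hyperfields: a multiplicative and additive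
bijection (not required to preserve the absolute values). -/
def IsHyperfieldIso (V W : ValuedHyperfield) (f : V.carrier → W.carrier) : Prop :=
  Function.Bijective f ∧ (∀ x y, f (V.mul x y) = W.mul (f x) (f y)) ∧
    ∀ x y, f '' V.add x y = W.add (f x) (f y)

namespace ValuedHyperfield

variable (V : ValuedHyperfield)

lemma abs_zero : V.abs V.zero = 0 := (V.abs_eq_zero_iff V.zero).2 rfl

lemma abs_pos {x : V.carrier} (hx : x ≠ V.zero) : 0 < V.abs x :=
  lt_of_le_of_ne (V.abs_nonneg x) fun h => hx ((V.abs_eq_zero_iff x).1 h.symm)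

lemma abs_one : V.abs V.one = 1 := by
  have h := V.abs_mul V.one V.one
  rw [V.mul_one] at h
  have h0 : 0 < V.abs V.one := V.abs_pos V.one_ne_zero
  nlinarith

lemma mul_zero' (x : V.carrier) : V.mul x V.zero = V.zero := by
  rw [← V.abs_eq_zero_iff, V.abs_mul, V.abs_zero, mul_zero]

lemma zero_mul' (x : V.carrier) : V.mul V.zero x = V.zero := by
  rw [V.mul_comm]; exact V.mul_zero' x

lemma one_mul' (x : V.carrier) : V.mul V.one x = x := by
  rw [V.mul_comm]; exact V.mul_one x

lemma neg_zero' : V.neg V.zero = V.zero := by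
  refine (V.neg_unique V.zero V.zero ?_).symm
  rw [V.add_zero]; rfl

lemma neg_neg' (x : V.carrier) : V.neg (V.neg x) = x := by
  refine (V.neg_unique (V.neg x) x ?_).symm
  rw [V.add_comm]; exact V.neg_mem x

lemma mul_negone (x : V.carrier) : V.mul (V.neg V.one) x = V.neg x := by
  refine V.neg_unique x (V.mul (V.neg V.one) x) ?_
  have h0 : V.mul V.zero x ∈ (fun t => V.mul t x) '' V.add V.one (V.neg V.one) :=
    ⟨V.zero, V.neg_mem V.one, rfl⟩
  have h1 := V.distrib V.one (V.neg V.one) x h0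
  rwa [V.zero_mul', V.one_mul'] at h1

lemma abs_negone : V.abs (V.neg V.one) = 1 := by
  have h : V.mul (V.neg V.one) (V.neg V.one) = V.one := by
    rw [V.mul_negone, V.neg_neg']
  have h2 := V.abs_mul (V.neg V.one) (V.neg V.one)
  rw [h, V.abs_one] at h2
  nlinarith [V.abs_nonneg (V.neg V.one)]

lemma abs_neg (x : V.carrier) : V.abs (V.neg x) = V.abs x := by
  rw [← V.mul_negone, V.abs_mul, V.abs_negone, one_mul]

lemma dist_zero_right (x : V.carrier) : V.dist x V.zero = V.abs x := by
  by_cases h : x = V.zero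
  · rw [h, V.dist_self, V.abs_zero]
  · refine (V.dist_eq x V.zero x h ?_)
    rw [V.neg_zero', V.add_zero]; rfl

lemma dist_zero_left (x : V.carrier) : V.dist V.zero x = V.abs x := by
  by_cases h : x = V.zero
  · rw [h, V.dist_self, V.abs_zero]
  · have : V.neg x ∈ V.add V.zero (V.neg x) := by
      rw [V.add_comm, V.add_zero]; rfl
    rw [V.dist_eq V.zero x (V.neg x) (Ne.symm h) this, V.abs_neg]

lemma exists_inv {x : V.carrier} (hx : x ≠ V.zero) :
    ∃ x', V.mul x x' = V.one ∧ V.abs x' = (V.abs x)⁻¹ := by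
  obtain ⟨x', hx'⟩ := V.mul_inv x hx
  refine ⟨x', hx', ?_⟩
  have h := V.abs_mul x x'
  rw [hx', V.abs_one] at h
  have hpos := V.abs_pos hx
  field_simp
  linarith [h]

end ValuedHyperfield
namespace ValuedHyperfield

variable (V : ValuedHyperfield)

lemma add_nonempty (hρ : 0 < V.rho) (x y : V.carrier) : (V.add x y).Nonempty := by
  by_cases h : max (V.abs x) (V.abs y) = 0
  · have hx : x = V.zero := (V.abs_eq_zero_iff x).1
      (le_antisymm (h ▸ le_max_left _ _) (V.abs_nonneg x))
    have hy : y = V.zero := (V.abs_eq_zero_iff y).1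
      (le_antisymm (h ▸ le_max_right _ _) (V.abs_nonneg y))
    refine ⟨x, ?_⟩
    rw [hy, V.add_zero]; rfl
  · have hmax : 0 < max (V.abs x) (V.abs y) :=
      lt_of_le_of_ne (le_max_iff.2 (Or.inl (V.abs_nonneg x))) (Ne.symm h)
    rcases V.rho_ball x y with ⟨w, hw⟩ | ⟨w, hw⟩
    · exact ⟨w, by rw [hw]; show V.dist w w ≤ _; rw [V.dist_self]; positivity⟩
    · exact ⟨w, by rw [hw]; show V.dist w w < _; rw [V.dist_self]; positivity⟩

lemma dist_nonneg' (hρ : 0 < V.rho) (x y : V.carrier) : 0 ≤ V.dist x y := by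
  by_cases h : x = y
  · rw [h, V.dist_self]
  · obtain ⟨z, hz⟩ := V.add_nonempty hρ x (V.neg y)
    rw [V.dist_eq x y z h hz]; exact V.abs_nonneg z

lemma ultra (hρ : 0 < V.rho) (a b c : V.carrier) :
    V.dist a b ≤ max (V.dist a c) (V.dist c b) := by
  by_cases hab : a = b
  · rw [hab, V.dist_self]
    exact le_max_iff.2 (Or.inl (V.dist_nonneg' hρ _ _))
  by_cases hac : a = c
  · rw [hac, V.dist_self]
    exact le_max_iff.2 (Or.inr le_rfl)
  by_cases hcb : c = b
  · subst hcb
    exact le_max_left _ _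
  obtain ⟨u, hu⟩ := V.add_nonempty hρ a (V.neg c)
  obtain ⟨v, hv⟩ := V.add_nonempty hρ c (V.neg b)
  have hac' : a ∈ V.add u c := (V.reverse u a c).1 hu
  have hcb' : c ∈ V.add v b := (V.reverse v c b).1 hv
  have hmem : a ∈ ⋃ t ∈ V.add u v, V.add t b := by
    rw [V.add_assoc u v b]
    exact Set.mem_biUnion hcb' hac'
  obtain ⟨t, ht, hat⟩ := by simpa using hmem
  have htab : t ∈ V.add a (V.neg b) := (V.reverse t a b).2 hat
  rw [V.dist_eq a b t hab htab, V.dist_eq a c u hac hu, V.dist_eq c b v hcb hv]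
  exact V.abs_add_le u v t ht

lemma mem_S_abs_le_one {z : V.carrier} (hz : z ∈ V.add V.one (V.neg V.one)) :
    V.abs z ≤ 1 := by
  have := V.abs_add_le _ _ _ hz
  rwa [V.abs_one, V.abs_neg, V.abs_one, max_self] at this

/-- if `u ∈ x + (-x)` and `x·x' = 1` then `u·x' ∈ 1 + (-1)`. -/
lemma mem_S_of_mem_P {x u x' : V.carrier} (hx' : V.mul x x' = V.one)
    (hu : u ∈ V.add x (V.neg x)) :
    V.mul u x' ∈ V.add V.one (V.neg V.one) := by
  have himg : V.mul u x' ∈ (fun t => V.mul t x') '' V.add x (V.neg x) := ⟨u, hu, rfl⟩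
  have h2 := V.distrib x (V.neg x) x' himg
  have h3 : V.mul (V.neg x) x' = V.neg V.one := by
    rw [← V.mul_negone x, V.mul_assoc, hx', V.mul_one]
  rwa [hx', h3] at h2

lemma mem_P_of_mem_S {s : V.carrier} (x : V.carrier)
    (hs : s ∈ V.add V.one (V.neg V.one)) :
    V.mul s x ∈ V.add x (V.neg x) := by
  have himg : V.mul s x ∈ (fun t => V.mul t x) '' V.add V.one (V.neg V.one) := ⟨s, hs, rfl⟩
  have h2 := V.distrib V.one (V.neg V.one) x himg
  rwa [V.one_mul', V.mul_negone] at h2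

lemma S_nontrivial (hρ : 0 < V.rho) :
    ∃ z ∈ V.add V.one (V.neg V.one), z ≠ V.zero := by
  by_contra hcon
  push_neg at hcon
  have hPsub : ∀ y : V.carrier, y ≠ V.zero → V.add y (V.neg y) ⊆ {V.zero} := by
    intro y hy u hu
    obtain ⟨y', hy', _⟩ := V.exists_inv hy
    have hS := hcon _ (V.mem_S_of_mem_P hy' hu)
    have : V.abs u * V.abs y' = 0 := by rw [← V.abs_mul, hS, V.abs_zero]
    have hy'0 : V.abs y' ≠ 0 := by
      intro h0
      have := V.abs_mul y y'
      rw [hy', V.abs_one, h0, mul_zero] at this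
      norm_num at this
    have : V.abs u = 0 := by
      rcases mul_eq_zero.1 this with h | h
      · exact h
      · exact absurd h hy'0
    exact (V.abs_eq_zero_iff u).1 this
  have hsing : ∀ x y : V.carrier, ∀ w ∈ V.add x y, V.add x y = {w} := by
    intro x y w hw
    by_cases hy : y = V.zero
    · rw [hy, V.add_zero] at hw ⊢
      rw [hw]
    · apply Set.eq_singleton_iff_unique_mem.2 ⟨hw, ?_⟩
      intro z hz
      have hxw : x ∈ V.add w (V.neg y) := (V.reverse x w y).2 hw
      have hmem : z ∈ ⋃ t ∈ V.add w (V.neg y), V.add t y := Set.mem_biUnion hxw hz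
      rw [V.add_assoc w (V.neg y) y] at hmem
      obtain ⟨t, ht, hzt⟩ := by simpa using hmem
      have ht0 : t = V.zero := by
        have : t ∈ V.add y (V.neg y) := by rwa [V.add_comm] at ht
        exact hPsub y hy this
      rw [ht0, V.add_zero] at hzt
      exact hzt
  have : V.rho ≤ 0 := by
    apply V.rho_min 0 le_rfl
    intro x y
    left
    obtain ⟨w, hw⟩ := V.add_nonempty hρ x y
    refine ⟨w, ?_⟩
    rw [hsing x y w hw]
    ext z
    simp only [Set.mem_singleton_iff, Set.mem_setOf_eq, zero_mul]
    constructor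
    · rintro rfl; rw [V.dist_self]
    · intro hzw
      by_contra hzw'
      obtain ⟨u, hu⟩ := V.add_nonempty hρ z (V.neg w)
      have hd := V.dist_eq z w u hzw' hu
      have hu0 : u = V.zero := (V.abs_eq_zero_iff u).1
        (le_antisymm (by rw [← hd]; exact hzw) (V.abs_nonneg u))
      rw [hu0] at hu
      have := V.neg_unique z (V.neg w) hu
      have hzw2 : z = w := by
        rw [← V.neg_neg' z, ← this, V.neg_neg']
      exact hzw' hzw2
  linarith

end ValuedHyperfield
namespace ValuedHyperfield

def npow (V : ValuedHyperfield) (x : V.carrier) : ℕ → V.carrier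
  | 0 => V.one
  | n + 1 => V.mul x (V.npow x n)

variable (V : ValuedHyperfield)

lemma abs_npow (x : V.carrier) (n : ℕ) : V.abs (V.npow x n) = V.abs x ^ n := by
  induction n with
  | zero => exact V.abs_one
  | succ n ih => rw [npow, V.abs_mul, ih, pow_succ]; ring

lemma theta_pos {θ : ℝ} (hθ : V.IsTheta θ) : 0 < θ := by
  obtain ⟨x, hx0, hxθ⟩ := hθ.1
  exact hxθ ▸ V.abs_pos hx0

lemma exists_zpow {θ : ℝ} (hθ : V.IsTheta θ) {x : V.carrier} (hx : x ≠ V.zero) :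
    ∃ n : ℤ, V.abs x = θ ^ n := by
  obtain ⟨π, hπ0, hπ⟩ := hθ.1
  have hθ0 : 0 < θ := V.theta_pos hθ
  have hθ1 : θ < 1 := hθ.2.1
  have ht0 : 0 < V.abs x := V.abs_pos hx
  have hinv : 1 < θ⁻¹ := (one_lt_inv₀ hθ0).2 hθ1
  obtain ⟨m, hm1, hm2⟩ := exists_mem_Ioc_zpow ht0 hinv
  set n : ℤ := -(m + 1) with hn
  have hpn : 0 < θ ^ n := zpow_pos hθ0 n
  have hle : V.abs x ≤ θ ^ n := by
    have he : (θ⁻¹ : ℝ) ^ (m + 1) = θ ^ n := by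
      rw [hn, zpow_neg]
      exact inv_zpow θ (m+1)
    rw [← he]; exact hm2
  have hgt : θ ^ (n + 1) < V.abs x := by
    have he : (θ⁻¹ : ℝ) ^ m = θ ^ (n + 1) := by
      have : n + 1 = -m := by rw [hn]; ring
      rw [this, zpow_neg]
      exact inv_zpow θ m
    rw [← he]; exact hm1
  have key : ∃ z : V.carrier, V.abs z = V.abs x * (θ ^ n)⁻¹ := by
    rcases le_or_gt 0 n with hn0 | hn0
    · obtain ⟨π', hπ', hπ'abs⟩ := V.exists_inv hπ0
      refine ⟨V.mul x (V.npow π' n.toNat), ?_⟩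
      rw [V.abs_mul, V.abs_npow, hπ'abs, hπ]
      congr 1
      rw [← zpow_natCast θ⁻¹ n.toNat, Int.toNat_of_nonneg hn0, inv_zpow]
    · refine ⟨V.mul x (V.npow π (-n).toNat), ?_⟩
      rw [V.abs_mul, V.abs_npow, hπ]
      congr 1
      rw [← zpow_natCast θ (-n).toNat, Int.toNat_of_nonneg (by omega), zpow_neg]
  obtain ⟨z, hz⟩ := key
  have hz1 : V.abs z ≤ 1 := by
    rw [hz, ← div_eq_mul_inv]
    exact (div_le_one hpn).2 hle
  have hz2 : θ < V.abs z := by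
    rw [hz, ← div_eq_mul_inv, lt_div_iff₀ hpn]
    calc θ * θ ^ n = θ ^ (n + 1) := by
          rw [zpow_add_one₀ (ne_of_gt hθ0)]; ring
      _ < V.abs x := hgt
  have hzne : z ≠ V.zero := by
    intro h
    rw [h, V.abs_zero] at hz2
    linarith
  have hz3 : V.abs z = 1 := by
    by_contra hne
    have hlt : V.abs z < 1 := lt_of_le_of_ne hz1 hne
    have := hθ.2.2 z hzne hlt
    linarith
  refine ⟨n, ?_⟩
  rw [hz3] at hz
  exact ((mul_inv_eq_one₀ (ne_of_gt hpn)).1 hz.symm)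

end ValuedHyperfield
namespace ValuedHyperfield

variable (V : ValuedHyperfield)

lemma zpow_nonneg_of_le_one' {θ : ℝ} (hθ0 : 0 < θ) (hθ1 : θ < 1) {m : ℤ}
    (h : θ ^ m ≤ 1) : 0 ≤ m := by
  by_contra hm
  push_neg at hm
  have h1 : (1:ℝ) < θ ^ m := one_lt_zpow_of_neg₀ hθ0 hθ1 hm
  linarith

lemma exists_sigma (hρ : 0 < V.rho) {θ : ℝ} (hθ : V.IsTheta θ) :
    ∃ σ : ℝ, 0 < σ ∧ (∃ s₀ ∈ V.add V.one (V.neg V.one), V.abs s₀ = σ) ∧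
      ∀ z ∈ V.add V.one (V.neg V.one), V.abs z ≤ σ := by
  have hθ0 : 0 < θ := V.theta_pos hθ
  have hθ1 : θ < 1 := hθ.2.1
  set N : Set ℕ := {k : ℕ | ∃ z ∈ V.add V.one (V.neg V.one), V.abs z = θ ^ k} with hN
  have hNne : N.Nonempty := by
    obtain ⟨z₀, hz₀S, hz₀ne⟩ := V.S_nontrivial hρ
    obtain ⟨m, hm⟩ := V.exists_zpow hθ hz₀ne
    have hm0 : 0 ≤ m := zpow_nonneg_of_le_one' hθ0 hθ1 (hm ▸ V.mem_S_abs_le_one hz₀S)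
    refine ⟨m.toNat, z₀, hz₀S, ?_⟩
    rw [hm, ← zpow_natCast θ m.toNat, Int.toNat_of_nonneg hm0]
  set k := sInf N with hk
  obtain ⟨s₀, hs₀S, hs₀⟩ := Nat.sInf_mem hNne
  refine ⟨θ ^ k, by positivity, ⟨s₀, hs₀S, hs₀⟩, ?_⟩
  intro z hzS
  by_cases hz : z = V.zero
  · rw [hz, V.abs_zero]; positivity
  · obtain ⟨m, hm⟩ := V.exists_zpow hθ hz
    have hm0 : 0 ≤ m := zpow_nonneg_of_le_one' hθ0 hθ1 (hm ▸ V.mem_S_abs_le_one hzS)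
    have hmem : m.toNat ∈ N := by
      refine ⟨z, hzS, ?_⟩
      rw [hm, ← zpow_natCast θ m.toNat, Int.toNat_of_nonneg hm0]
    have hle : k ≤ m.toNat := Nat.sInf_le hmem
    calc V.abs z = θ ^ m.toNat := by
          rw [hm, ← zpow_natCast θ m.toNat, Int.toNat_of_nonneg hm0]
      _ ≤ θ ^ k := pow_le_pow_of_le_one hθ0.le hθ1.le hle

lemma S_eq_ball (hρ : 0 < V.rho) {σ : ℝ}
    (hσatt : ∃ s₀ ∈ V.add V.one (V.neg V.one), V.abs s₀ = σ)
    (hσmax : ∀ z ∈ V.add V.one (V.neg V.one), V.abs z ≤ σ) :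
    V.add V.one (V.neg V.one) = {z | V.abs z ≤ σ} := by
  obtain ⟨s₀, hs₀S, hs₀⟩ := hσatt
  have hmax1 : max (V.abs V.one) (V.abs (V.neg V.one)) = 1 := by
    rw [V.abs_one, V.abs_negone, max_self]
  have h0S : V.zero ∈ V.add V.one (V.neg V.one) := V.neg_mem V.one
  rcases V.rho_ball V.one (V.neg V.one) with ⟨w, hw⟩ | ⟨w, hw⟩
  · rw [hmax1, _root_.mul_one] at hw
    have hwρ : V.abs w ≤ V.rho := by
      have := hw ▸ h0S
      rw [Set.mem_setOf_eq, V.dist_zero_left] at this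
      exact this
    have hσρ : σ ≤ V.rho := by
      calc σ = V.dist s₀ V.zero := by rw [V.dist_zero_right, hs₀]
        _ ≤ max (V.dist s₀ w) (V.dist w V.zero) := V.ultra hρ _ _ _
        _ ≤ V.rho := by
            refine max_le ?_ ?_
            · have := hw ▸ hs₀S; exact this
            · rw [V.dist_zero_right]; exact hwρ
    ext z
    constructor
    · exact fun hz => hσmax z hz
    · intro hz
      rw [hw]
      calc V.dist z w ≤ max (V.dist z V.zero) (V.dist V.zero w) := V.ultra hρ _ _ _
        _ ≤ V.rho := by
            refine max_le ?_ ?_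
            · rw [V.dist_zero_right]; exact le_trans hz hσρ
            · rw [V.dist_zero_left]; exact hwρ
  · rw [hmax1, _root_.mul_one] at hw
    have hwρ : V.abs w < V.rho := by
      have := hw ▸ h0S
      rw [Set.mem_setOf_eq, V.dist_zero_left] at this
      exact this
    have hσρ : σ < V.rho := by
      calc σ = V.dist s₀ V.zero := by rw [V.dist_zero_right, hs₀]
        _ ≤ max (V.dist s₀ w) (V.dist w V.zero) := V.ultra hρ _ _ _
        _ < V.rho := by
            refine max_lt ?_ ?_
            · have := hw ▸ hs₀S; exact this
            · rw [V.dist_zero_right]; exact hwρ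
    ext z
    constructor
    · exact fun hz => hσmax z hz
    · intro hz
      rw [hw]
      show V.dist z w < V.rho
      calc V.dist z w ≤ max (V.dist z V.zero) (V.dist V.zero w) := V.ultra hρ _ _ _
        _ < V.rho := by
            refine max_lt ?_ ?_
            · rw [V.dist_zero_right]; exact lt_of_le_of_lt hz hσρ
            · rw [V.dist_zero_left]; exact hwρ

lemma P_eq {σ : ℝ} (hσ : 0 < σ)
    (hS : V.add V.one (V.neg V.one) = {z | V.abs z ≤ σ}) (x : V.carrier) :
    V.add x (V.neg x) = {z | V.abs z ≤ σ * V.abs x} := by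
  by_cases hx : x = V.zero
  · rw [hx, V.neg_zero', V.add_zero, V.abs_zero, mul_zero]
    ext z
    simp only [Set.mem_singleton_iff, Set.mem_setOf_eq]
    constructor
    · rintro rfl; rw [V.abs_zero]
    · intro h
      exact (V.abs_eq_zero_iff z).1 (le_antisymm h (V.abs_nonneg z))
  · obtain ⟨x', hx', hx'abs⟩ := V.exists_inv hx
    have hxpos : 0 < V.abs x := V.abs_pos hx
    ext z
    simp only [Set.mem_setOf_eq]
    constructor
    · intro hz
      have hs := V.mem_S_of_mem_P hx' hz
      rw [hS] at hs
      have : V.abs (V.mul z x') ≤ σ := hs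
      rw [V.abs_mul, hx'abs] at this
      calc V.abs z = V.abs z * (V.abs x)⁻¹ * V.abs x := by field_simp
        _ ≤ σ * V.abs x := mul_le_mul_of_nonneg_right this hxpos.le
    · intro hz
      have hsS : V.mul z x' ∈ V.add V.one (V.neg V.one) := by
        rw [hS]
        show V.abs (V.mul z x') ≤ σ
        rw [V.abs_mul, hx'abs]
        rw [← div_eq_mul_inv]
        exact (div_le_iff₀ hxpos).2 hz
      have := V.mem_P_of_mem_S x hsS
      have hzz : V.mul (V.mul z x') x = z := by
        rw [V.mul_assoc, V.mul_comm x' x, hx', V.mul_one]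
      rwa [hzz] at this

lemma order_iff (hρ : 0 < V.rho) {σ : ℝ} (hσ : 0 < σ)
    {s₀ : V.carrier} (hs₀S : s₀ ∈ V.add V.one (V.neg V.one)) (hs₀ : V.abs s₀ = σ)
    (hS : V.add V.one (V.neg V.one) = {z | V.abs z ≤ σ}) (x y : V.carrier) :
    V.add x (V.neg x) ⊆ V.add y (V.neg y) ↔ V.abs x ≤ V.abs y := by
  constructor
  · intro h
    by_cases hx : x = V.zero
    · rw [hx, V.abs_zero]; exact V.abs_nonneg y
    · have hmem : V.mul s₀ x ∈ V.add x (V.neg x) := V.mem_P_of_mem_S x hs₀S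
      have := h hmem
      rw [V.P_eq hσ hS y] at this
      have h2 : V.abs (V.mul s₀ x) ≤ σ * V.abs y := this
      rw [V.abs_mul, hs₀] at h2
      exact le_of_mul_le_mul_left h2 hσ
  · intro h
    rw [V.P_eq hσ hS x, V.P_eq hσ hS y]
    intro z hz
    exact le_trans hz (mul_le_mul_of_nonneg_left h hσ.le)

end ValuedHyperfield
section IsoLemmas

variable {V W : ValuedHyperfield} {f : V.carrier → W.carrier}

lemma iso_map_one (hf : IsHyperfieldIso V W f) : f V.one = W.one := by
  obtain ⟨hbij, hmul, _⟩ := hf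
  have key : ∀ y, W.mul y (f V.one) = y := by
    intro y
    obtain ⟨x, hx⟩ := hbij.2 y
    have h := hmul x V.one
    rw [V.mul_one, hx] at h
    exact h.symm
  have h1 := key W.one
  rwa [W.one_mul'] at h1

lemma iso_map_zero (hf : IsHyperfieldIso V W f) : f V.zero = W.zero := by
  have hf1 := iso_map_one hf
  obtain ⟨hbij, hmul, _⟩ := hf
  have h := hmul V.zero V.zero
  rw [V.mul_zero'] at h
  by_contra h0
  obtain ⟨u, hu⟩ := W.mul_inv _ h0
  have h2 : W.mul (f V.zero) u = f V.zero := by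
    conv_lhs => rw [h]
    rw [W.mul_assoc, hu, W.mul_one]
  have h3 : f V.zero = W.one := h2.symm.trans hu
  have h4 : V.zero = V.one := hbij.1 (h3.trans hf1.symm)
  exact V.one_ne_zero h4.symm

lemma iso_map_neg (hf : IsHyperfieldIso V W f) (x : V.carrier) :
    f (V.neg x) = W.neg (f x) := by
  have h0 : f V.zero ∈ f '' V.add x (V.neg x) :=
    Set.mem_image_of_mem f (V.neg_mem x)
  rw [hf.2.2, iso_map_zero hf] at h0
  exact W.neg_unique (f x) (f (V.neg x)) h0

lemma iso_map_P (hf : IsHyperfieldIso V W f) (x : V.carrier) :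
    f '' V.add x (V.neg x) = W.add (f x) (W.neg (f x)) := by
  rw [hf.2.2, iso_map_neg hf]

end IsoLemmas
theorem stmt12 (V W : ValuedHyperfield)
    (hdiscV : V.Discrete) (hdiscW : W.Discrete)
    (hvalV : ∃ x : V.carrier, V.abs x ≠ 0 ∧ V.abs x ≠ 1)
    (hvalW : ∃ x : W.carrier, W.abs x ≠ 0 ∧ W.abs x ≠ 1)
    (hρV : 0 < V.rho) (hρW : 0 < W.rho)
    (θ θ' : ℝ) (hθ : V.IsTheta θ) (hθ' : W.IsTheta θ')
    (f : V.carrier → W.carrier) (hf : IsHyperfieldIso V W f) :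
    (∀ x : V.carrier, W.abs (f x) = V.abs x ^ (Real.log θ' / Real.log θ)) ∧
    (∀ π : V.carrier, V.abs π = θ → W.abs (f π) = θ') := by
  obtain ⟨hbij, hmul, hadd⟩ := hf
  have hf' : IsHyperfieldIso V W f := ⟨hbij, hmul, hadd⟩
  have hf1 : f V.one = W.one := iso_map_one hf'
  have hf0 : f V.zero = W.zero := iso_map_zero hf'
  have hP : ∀ x, f '' V.add x (V.neg x) = W.add (f x) (W.neg (f x)) := iso_map_P hf'
  obtain ⟨σV, hσV, ⟨sV, hsVS, hsV⟩, hmaxV⟩ := V.exists_sigma hρV hθ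
  obtain ⟨σW, hσW, ⟨sW, hsWS, hsW⟩, hmaxW⟩ := W.exists_sigma hρW hθ'
  have hSV := V.S_eq_ball hρV ⟨sV, hsVS, hsV⟩ hmaxV
  have hSW := W.S_eq_ball hρW ⟨sW, hsWS, hsW⟩ hmaxW
  have hord : ∀ x y, V.abs x ≤ V.abs y ↔ W.abs (f x) ≤ W.abs (f y) := by
    intro x y
    rw [← V.order_iff hρV hσV hsVS hsV hSV x y,
        ← W.order_iff hρW hσW hsWS hsW hSW (f x) (f y)]
    constructor
    · intro h
      rw [← hP x, ← hP y]
      exact Set.image_mono h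
    · intro h
      rw [← hP x, ← hP y] at h
      exact (Set.image_subset_image_iff hbij.1).1 h
  have heq : ∀ x y, V.abs x = V.abs y → W.abs (f x) = W.abs (f y) := fun x y h =>
    le_antisymm ((hord x y).1 h.le) ((hord y x).1 h.ge)
  have hlt : ∀ x y, V.abs x < V.abs y ↔ W.abs (f x) < W.abs (f y) := by
    intro x y
    rw [lt_iff_le_not_ge, lt_iff_le_not_ge, hord x y, hord y x]
  have hfne : ∀ x, x ≠ V.zero → f x ≠ W.zero := by
    intro x hx h
    exact hx (hbij.1 (h.trans hf0.symm))
  obtain ⟨π₀, hπ₀ne, hπ₀⟩ := hθ.1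
  have habs1 : W.abs (f V.one) = 1 := by rw [hf1, W.abs_one]
  have hfπ : W.abs (f π₀) = θ' := by
    apply le_antisymm
    · apply hθ'.2.2 _ (hfne π₀ hπ₀ne)
      have h1 : V.abs π₀ < V.abs V.one := by rw [hπ₀, V.abs_one]; exact hθ.2.1
      have h2 := (hlt π₀ V.one).1 h1
      rwa [habs1] at h2
    · obtain ⟨w', hw'ne, hw'⟩ := hθ'.1
      obtain ⟨u, hu⟩ := hbij.2 w'
      have hune : u ≠ V.zero := fun h => hw'ne (by rw [← hu, h, hf0])
      have huabs : V.abs u < 1 := by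
        have h1 : W.abs (f u) < W.abs (f V.one) := by
          rw [hu, hw', habs1]; exact hθ'.2.1
        have h2 := (hlt u V.one).2 h1
        rwa [V.abs_one] at h2
      have hule : V.abs u ≤ θ := hθ.2.2 u hune huabs
      have h3 : W.abs (f u) ≤ W.abs (f π₀) := (hord u π₀).1 (by rw [hπ₀]; exact hule)
      rwa [hu, hw'] at h3
  have hfnpow : ∀ (x : V.carrier) (n : ℕ), f (V.npow x n) = W.npow (f x) n := by
    intro x n
    induction n with
    | zero => exact hf1
    | succ n ih =>
        show f (V.mul x (V.npow x n)) = W.mul (f x) (W.npow (f x) n)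
        rw [hmul, ih]
  have hcoreN : ∀ (x : V.carrier), ∀ n : ℕ,
      V.abs x = θ ^ n → W.abs (f x) = θ' ^ n := by
    intro x n hn
    have h1 : V.abs x = V.abs (V.npow π₀ n) := by rw [V.abs_npow, hπ₀, hn]
    have h2 := heq x _ h1
    rwa [hfnpow, W.abs_npow, hfπ] at h2
  have hθ0 : (0:ℝ) < θ := V.theta_pos hθ
  have hθ'0 : (0:ℝ) < θ' := W.theta_pos hθ'
  have hcore : ∀ (x : V.carrier), x ≠ V.zero → ∀ n : ℤ,
      V.abs x = θ ^ n → W.abs (f x) = θ' ^ n := by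
    intro x hx n hn
    rcases le_or_gt 0 n with h0 | h0
    · have h1 := hcoreN x n.toNat
        (by rw [hn, ← zpow_natCast θ n.toNat, Int.toNat_of_nonneg h0])
      rw [h1, ← zpow_natCast θ' n.toNat, Int.toNat_of_nonneg h0]
    · obtain ⟨x', hx', hx'abs⟩ := V.exists_inv hx
      have hx'ne : x' ≠ V.zero := by
        intro h
        rw [h, V.mul_zero'] at hx'
        exact V.one_ne_zero hx'.symm
      have hx'val : V.abs x' = θ ^ (-n) := by rw [hx'abs, hn, ← zpow_neg]
      have h2 := hcoreN x' (-n).toNat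
        (by rw [hx'val, ← zpow_natCast θ (-n).toNat, Int.toNat_of_nonneg (by omega)])
      have h3 : W.mul (f x) (f x') = W.one := by rw [← hmul, hx', hf1]
      have h4 : W.abs (f x) * W.abs (f x') = 1 := by rw [← W.abs_mul, h3, W.abs_one]
      rw [h2] at h4
      have h5 : (θ' : ℝ) ^ ((-n).toNat : ℕ) = θ' ^ (-n : ℤ) := by
        rw [← zpow_natCast θ' (-n).toNat, Int.toNat_of_nonneg (by omega)]
      rw [h5, zpow_neg] at h4
      exact (mul_inv_eq_one₀ (ne_of_gt (zpow_pos hθ'0 n))).1 h4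
  have hlogθ : Real.log θ < 0 := Real.log_neg hθ0 hθ.2.1
  have hlogθ' : Real.log θ' < 0 := Real.log_neg hθ'0 hθ'.2.1
  have main : ∀ x, W.abs (f x) = V.abs x ^ (Real.log θ' / Real.log θ) := by
    intro x
    by_cases hx : x = V.zero
    · rw [hx, hf0, W.abs_zero, V.abs_zero]
      rw [Real.zero_rpow (div_ne_zero (ne_of_lt hlogθ') (ne_of_lt hlogθ))]
    · obtain ⟨n, hn⟩ := V.exists_zpow hθ hx
      rw [hcore x hx n hn, hn]
      rw [Real.rpow_def_of_pos (zpow_pos hθ0 n), Real.log_zpow]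
      have he : (n : ℝ) * Real.log θ * (Real.log θ' / Real.log θ)
          = n * Real.log θ' := by
        field_simp [ne_of_lt hlogθ]
      rw [he, ← Real.log_zpow, Real.exp_log (zpow_pos hθ'0 n)]
  refine ⟨main, ?_⟩
  intro π hπ
  have h1 : V.abs π = V.abs π₀ := by rw [hπ₀, hπ]
  rw [heq π π₀ h1, hfπ]
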